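/- Let A = k[X₁,…,X_m,Y,Z,T]/(α(X₁,…,X_m)Y − F(X₁,…,X_m,Z,T)) with α ∉ k and F of positive degree in Z or T. Then k[x₁,…,x_m,z,t] is contained in the Derksen invariant DK(A). -/

import Mathlib

open Polynomial in
structure ExpMap (k B : Type*) [CommRing k] [CommRing B] [Algebra k B] where
  toAlgHom : B →ₐ[k] Polynomial B
  eval_zero : ∀ b, (toAlgHom b).eval 0 = b
  coassoc : ∀ b, (toAlgHom b).map toAlgHom.toRingHom =
      Polynomial.eval₂ ((C : Polynomial B →+* Polynomial (Polynomial B)).comp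
        (C : B →+* Polynomial B)) (C X + X) (toAlgHom b)

noncomputable def ExpMap.invariants {k B : Type*} [CommRing k] [CommRing B] [Algebra k B]
    (φ : ExpMap k B) : Subalgebra k B :=
  AlgHom.equalizer φ.toAlgHom (Polynomial.CAlgHom)

/-- The Derksen invariant: the k-subalgebra generated by the invariant rings of all
non-trivial exponential maps. -/
noncomputable def Derksen (k B : Type*) [CommRing k] [CommRing B] [Algebra k B] :
    Subalgebra k B :=
  Algebra.adjoin k (⋃ φ ∈ {φ : ExpMap k B | φ.invariants ≠ ⊤}, (φ.invariants : Set B))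

/-- The Makar-Limanov invariant: the intersection of the invariant rings of all
exponential maps. -/
noncomputable def MakarLimanov (k B : Type*) [CommRing k] [CommRing B] [Algebra k B] :
    Subalgebra k B :=
  ⨅ φ : ExpMap k B, φ.invariants

open MvPolynomial

/-- The relation α(X₁,…,X_m)·Y − F(X₁,…,X_m,Z,T) in k[X₁,…,X_m,Y,Z,T];
variables: `Sum.inl i` = Xᵢ, `Sum.inr 0` = Y, `Sum.inr 1` = Z, `Sum.inr 2` = T,
with F given as a polynomial in the Xᵢ and Z = `Sum.inr 0`, T = `Sum.inr 1`. -/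
noncomputable def relA {k : Type*} [CommRing k] {m : ℕ}
    (α : MvPolynomial (Fin m) k) (F : MvPolynomial (Fin m ⊕ Fin 2) k) :
    MvPolynomial (Fin m ⊕ Fin 3) k :=
  rename Sum.inl α * X (Sum.inr 0) - rename (Sum.map id Fin.succ) F

/-- The ring A = k[X₁,…,X_m,Y,Z,T]/(αY − F). -/
noncomputable abbrev RingA {k : Type*} [CommRing k] {m : ℕ}
    (α : MvPolynomial (Fin m) k) (F : MvPolynomial (Fin m ⊕ Fin 2) k) :=
  MvPolynomial (Fin m ⊕ Fin 3) k ⧸ Ideal.span {relA α F}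

/-- The image of a polynomial in A. -/
noncomputable def toA {k : Type*} [CommRing k] {m : ℕ}
    (α : MvPolynomial (Fin m) k) (F : MvPolynomial (Fin m ⊕ Fin 2) k) :
    MvPolynomial (Fin m ⊕ Fin 3) k →ₐ[k] RingA α F :=
  Ideal.Quotient.mkₐ k _

section DerksenAux

variable {k : Type*} [Field k] {m : ℕ}

/-- Any algebra hom out of MvPolynomial is an aeval. -/
lemma algHom_eq_aeval {σ : Type*} {B : Type*} [CommRing B] [Algebra k B]
    (ψ : MvPolynomial σ k →ₐ[k] B) (p : MvPolynomial σ k) :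
    ψ p = aeval (fun s => ψ (X s)) p := by
  conv_lhs => rw [aeval_unique ψ]
  rfl

lemma aeval_eq_algHom {σ : Type*} {B : Type*} [CommRing B] [Algebra k B]
    (ψ : MvPolynomial σ k →ₐ[k] B) (g : σ → B) (hg : ∀ s, g s = ψ (X s))
    (p : MvPolynomial σ k) : aeval g p = ψ p := by
  rw [algHom_eq_aeval ψ p, funext hg]

variable (α : MvPolynomial (Fin m) k) (F : MvPolynomial (Fin m ⊕ Fin 2) k)

lemma toA_relA_eq_zero : toA α F (relA α F) = 0 := by
  rw [toA, Ideal.Quotient.mkₐ_eq_mk, Ideal.Quotient.eq_zero_iff_mem]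
  exact Ideal.subset_span rfl

lemma toA_rel : toA α F (rename Sum.inl α) * toA α F (X (Sum.inr 0))
    = toA α F (rename (Sum.map id Fin.succ) F) := by
  have h := toA_relA_eq_zero α F
  replace h : toA α F (rename Sum.inl α * X (Sum.inr 0) - rename (Sum.map id Fin.succ) F) = 0 := h
  rw [map_sub, map_mul, sub_eq_zero] at h
  exact h

/-- The image of α in A is nonzero. -/
lemma aA_ne_zero (hα0 : α ≠ 0) : toA α F (rename Sum.inl α) ≠ 0 := by
  intro h
  rw [toA, Ideal.Quotient.mkₐ_eq_mk, Ideal.Quotient.eq_zero_iff_mem,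
    Ideal.mem_span_singleton] at h
  -- E : separate off the Y variable
  set E : MvPolynomial (Fin m ⊕ Fin 3) k →ₐ[k] Polynomial (MvPolynomial (Fin m ⊕ Fin 2) k) :=
    aeval (fun s => match s with
      | .inl i => Polynomial.C (X (.inl i))
      | .inr i => if i = 0 then Polynomial.X
          else if i = 1 then Polynomial.C (X (.inr 0)) else Polynomial.C (X (.inr 1)))
    with hE
  have hEα : E (rename Sum.inl α) = Polynomial.C (rename Sum.inl α) := by
    rw [hE, aeval_rename]
    exact aeval_eq_algHom ((Polynomial.CAlgHom).comp (rename Sum.inl)) _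
      (fun s => by simp [Polynomial.CAlgHom]) α
  have hEF : E (rename (Sum.map id Fin.succ) F) = Polynomial.C F := by
    rw [hE, aeval_rename]
    refine aeval_eq_algHom ((Polynomial.CAlgHom).comp
      (AlgHom.id k (MvPolynomial (Fin m ⊕ Fin 2) k))) _ (fun s => ?_) F
    rcases s with i | i
    · simp [Polynomial.CAlgHom]
    · fin_cases i <;> simp [Polynomial.CAlgHom]
  have hErel : E (relA α F) = Polynomial.C (rename Sum.inl α) * Polynomial.X - Polynomial.C F := by
    unfold relA
    rw [map_sub, map_mul, hEα, hEF, hE]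
    simp
  have hαR : (rename Sum.inl α : MvPolynomial (Fin m ⊕ Fin 2) k) ≠ 0 := by
    intro h0
    exact hα0 ((rename_injective _ Sum.inl_injective) (by simpa using h0))
  have hdvd := map_dvd E h
  rw [hErel, hEα] at hdvd
  have hdeg : (Polynomial.C (rename Sum.inl α : MvPolynomial (Fin m ⊕ Fin 2) k) * Polynomial.X
      - Polynomial.C F).degree = 1 := by
    rw [sub_eq_add_neg]
    rw [Polynomial.degree_add_eq_left_of_degree_lt]
    · exact Polynomial.degree_C_mul_X hαR
    · rw [Polynomial.degree_C_mul_X hαR, Polynomial.degree_neg]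
      exact lt_of_le_of_lt Polynomial.degree_C_le (by norm_num)
  have := Polynomial.degree_le_of_dvd hdvd (by simpa using hαR)
  rw [hdeg, Polynomial.degree_C hαR] at this
  exact absurd this (by norm_num)

end DerksenAux

section DerksenAux2

variable {k : Type*} [Field k] {m : ℕ}

lemma ringHom_comp_aeval {σ : Type*} {B B' : Type*} [CommRing B] [CommRing B']
    [Algebra k B] [Algebra k B'] (f : B →+* B')
    (hf : ∀ c : k, f (algebraMap k B c) = algebraMap k B' c) (g : σ → B)
    (p : MvPolynomial σ k) : f (aeval g p) = aeval (fun s => f (g s)) p := by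
  induction p using MvPolynomial.induction_on with
  | C c => simp [hf]
  | add p q hp hq => simp [map_add, hp, hq]
  | mul_X p s hp => simp [map_mul, hp]

/-- Substitution sending the j-th of Z,T to itself plus a new polynomial variable. -/
noncomputable def PhiJ (k : Type*) [Field k] (m : ℕ) (j : Fin 2) :
    MvPolynomial (Fin m ⊕ Fin 2) k →ₐ[k] Polynomial (MvPolynomial (Fin m ⊕ Fin 2) k) :=
  aeval (fun s => Polynomial.C (X s) + if s = Sum.inr j then Polynomial.X else 0)

lemma exists_Q (j : Fin 2) (F : MvPolynomial (Fin m ⊕ Fin 2) k) :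
    ∃ Q, PhiJ k m j F = Polynomial.C F + Polynomial.X * Q := by
  have h0 : Polynomial.eval 0 (PhiJ k m j F) = F := by
    rw [PhiJ]
    rw [show (Polynomial.eval 0 : Polynomial (MvPolynomial (Fin m ⊕ Fin 2) k)
        → MvPolynomial (Fin m ⊕ Fin 2) k) = ⇑(Polynomial.evalRingHom 0) from rfl]
    rw [ringHom_comp_aeval (k := k) _ (fun c => by simp) _ F]
    have : ∀ s : Fin m ⊕ Fin 2, (Polynomial.evalRingHom (0 : MvPolynomial (Fin m ⊕ Fin 2) k))
        (Polynomial.C (X s) + if s = Sum.inr j then Polynomial.X else 0) = X s := by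
      intro s
      split_ifs <;> simp
    rw [funext this]
    exact aeval_X_left_apply F
  have hdvd : Polynomial.X ∣ PhiJ k m j F - Polynomial.C F := by
    rw [Polynomial.X_dvd_iff, Polynomial.coeff_sub, Polynomial.coeff_zero_eq_eval_zero, h0,
      Polynomial.coeff_C_zero, sub_self]
  obtain ⟨Q, hQ⟩ := hdvd
  exact ⟨Q, by linear_combination hQ⟩

/-- Master substitution lemma: substituting the j-th variable shifted by `w`. -/
lemma master {B : Type*} [CommRing B] [Algebra k B] (j : Fin 2)
    (F : MvPolynomial (Fin m ⊕ Fin 2) k) (Q : Polynomial (MvPolynomial (Fin m ⊕ Fin 2) k))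
    (hQ : PhiJ k m j F = Polynomial.C F + Polynomial.X * Q)
    (g : Fin m ⊕ Fin 2 → B) (w : B) :
    aeval (fun s => g s + if s = Sum.inr j then w else 0) F
      = aeval g F + w * Polynomial.eval₂
          ((aeval g : MvPolynomial (Fin m ⊕ Fin 2) k →ₐ[k] B) : MvPolynomial (Fin m ⊕ Fin 2) k →+* B)
          w Q := by
  set f : MvPolynomial (Fin m ⊕ Fin 2) k →+* B :=
    ((aeval g : MvPolynomial (Fin m ⊕ Fin 2) k →ₐ[k] B) : MvPolynomial (Fin m ⊕ Fin 2) k →+* B)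
    with hf
  have hE := congrArg (⇑(Polynomial.eval₂RingHom f w)) hQ
  rw [map_add, map_mul] at hE
  simp only [Polynomial.coe_eval₂RingHom, Polynomial.eval₂_C, Polynomial.eval₂_X] at hE
  have hfun : (fun s => (Polynomial.eval₂RingHom f w)
        (Polynomial.C (X s) + if s = Sum.inr j then Polynomial.X else 0))
      = fun s : Fin m ⊕ Fin 2 => g s + if s = Sum.inr j then w else 0 := by
    funext s
    rw [map_add]
    simp only [Polynomial.coe_eval₂RingHom, Polynomial.eval₂_C, Polynomial.eval₂_X]
    congr 1
    · rw [hf]; simp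
    · split_ifs <;> simp
  have hleft : Polynomial.eval₂ f w (PhiJ k m j F)
      = aeval (fun s => g s + if s = Sum.inr j then w else 0) F := by
    rw [show Polynomial.eval₂ f w (PhiJ k m j F)
        = (Polynomial.eval₂RingHom f w) (PhiJ k m j F) from rfl]
    rw [PhiJ, ringHom_comp_aeval (k := k) _ (fun c => by simp [hf]) _ F, hfun]
  rw [hleft] at hE
  exact hE

end DerksenAux2

section
variable {k : Type*} [Field k] {m : ℕ}

/-- Master lemma, two-step version. -/
lemma master2 {B : Type*} [CommRing B] [Algebra k B] (j : Fin 2)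
    (F : MvPolynomial (Fin m ⊕ Fin 2) k) (Q : Polynomial (MvPolynomial (Fin m ⊕ Fin 2) k))
    (hQ : PhiJ k m j F = Polynomial.C F + Polynomial.X * Q)
    (g : Fin m ⊕ Fin 2 → B) (w1 w2 : B) :
    aeval (fun s => g s + if s = Sum.inr j then w1 + w2 else 0) F
      = aeval (fun s => g s + if s = Sum.inr j then w1 else 0) F
        + w2 * Polynomial.eval₂
          (↑(aeval (fun s => g s + if s = Sum.inr j then w1 else 0) :
              MvPolynomial (Fin m ⊕ Fin 2) k →ₐ[k] B)) w2 Q := by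
  have h := master j F Q hQ (fun s => g s + if s = Sum.inr j then w1 else 0) w2
  rw [show (fun s => (fun s => g s + if s = Sum.inr j then w1 else 0) s
      + if s = Sum.inr j then w2 else 0)
      = fun s : Fin m ⊕ Fin 2 => g s + if s = Sum.inr j then w1 + w2 else 0 from ?_] at h
  · exact h
  · funext s
    simp only
    split_ifs <;> ring

end

section DerksenAux3

variable {k : Type*} [Field k] {m : ℕ}

lemma hom_eval₂_aeval {σ : Type*} {B B' : Type*} [CommRing B] [CommRing B']
    [Algebra k B] [Algebra k B'] (h : B →+* B')
    (hf : ∀ c : k, h (algebraMap k B c) = algebraMap k B' c) (g : σ → B) (w : B)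
    (Q : Polynomial (MvPolynomial σ k)) :
    h (Polynomial.eval₂ (↑(aeval g : MvPolynomial σ k →ₐ[k] B)) w Q)
      = Polynomial.eval₂ (↑(aeval (fun s => h (g s)) : MvPolynomial σ k →ₐ[k] B')) (h w) Q := by
  rw [Polynomial.hom_eval₂]
  congr 1
  apply MvPolynomial.ringHom_ext
  · intro c
    simp [hf]
  · intro s
    simp

variable (α : MvPolynomial (Fin m) k) (F : MvPolynomial (Fin m ⊕ Fin 2) k)

set_option maxHeartbeats 2000000 in
lemma exists_expMap (hdom : IsDomain (RingA α F))
    (haα : toA α F (rename Sum.inl α) ≠ 0) (j : Fin 2) :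
    ∃ φ : ExpMap k (RingA α F), φ.invariants ≠ ⊤ ∧
      (∀ i : Fin m, toA α F (X (Sum.inl i)) ∈ φ.invariants) ∧
      (∀ i : Fin 2, i ≠ j → toA α F (X (Sum.inr i.succ)) ∈ φ.invariants) := by
  haveI := hdom
  obtain ⟨Q, hQ⟩ := exists_Q j F
  set A' := RingA α F with hA'
  set aα := toA α F (rename Sum.inl α) with haαdef
  set xA : Fin m ⊕ Fin 3 → A' := fun s => toA α F (X s) with hxA
  set g : Fin m ⊕ Fin 2 → Polynomial A' :=
    fun s => Polynomial.C (xA (Sum.map id Fin.succ s)) with hg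
  set w : Polynomial A' := Polynomial.C aα * Polynomial.X with hw
  set EQ : Polynomial A' :=
    Polynomial.eval₂ (↑(aeval g : MvPolynomial (Fin m ⊕ Fin 2) k →ₐ[k] Polynomial A')) w Q with hEQ
  set v : Fin m ⊕ Fin 3 → Polynomial A' := fun s =>
    match s with
    | .inl i => Polynomial.C (xA (.inl i))
    | .inr i => if i = 0 then Polynomial.C (xA (.inr 0)) + Polynomial.X * EQ
        else Polynomial.C (xA (.inr i)) + if i = j.succ then w else 0
    with hv
  have hvinl : ∀ i, v (Sum.inl i) = Polynomial.C (xA (Sum.inl i)) := fun i => by rw [hv]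
  have hvY : v (Sum.inr 0) = Polynomial.C (xA (Sum.inr 0)) + Polynomial.X * EQ := by
    rw [hv]
    simp
  have hvinr : ∀ i : Fin 3, i ≠ 0 → v (Sum.inr i)
      = Polynomial.C (xA (Sum.inr i)) + if i = j.succ then w else 0 := by
    intro i h0
    rw [hv]
    simp only
    rw [if_neg h0]
  set Ψ : MvPolynomial (Fin m ⊕ Fin 3) k →ₐ[k] Polynomial A' := aeval v with hΨ
  -- images of renamed polynomials
  have h1 : ∀ p : MvPolynomial (Fin m) k,
      Ψ (rename Sum.inl p) = Polynomial.C (toA α F (rename Sum.inl p)) := by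
    intro p
    rw [hΨ, aeval_rename]
    exact aeval_eq_algHom (B := Polynomial A') ((Polynomial.CAlgHom (R := k)).comp
      ((toA α F).comp (rename Sum.inl))) (v ∘ Sum.inl) (fun i => by simp [hv, hxA, Polynomial.CAlgHom]) p
  have h2 : aeval g F = Polynomial.C (toA α F (rename (Sum.map id Fin.succ) F)) := by
    rw [show (Polynomial.C (toA α F (rename (Sum.map id Fin.succ) F)))
      = ((Polynomial.CAlgHom (R := k)).comp ((toA α F).comp (rename (Sum.map id Fin.succ)))) F
      from rfl]
    exact aeval_eq_algHom (B := Polynomial A') _ _ (fun s => by simp [hg, hxA, Polynomial.CAlgHom]) F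
  have hvmap : ∀ s : Fin m ⊕ Fin 2, v (Sum.map id Fin.succ s)
      = g s + if s = Sum.inr j then w else 0 := by
    intro s
    rcases s with i | i
    · show v (Sum.inl i) = _
      rw [hvinl, hg]
      simp [Sum.map]
    · show v (Sum.inr i.succ) = _
      rw [hvinr i.succ (Fin.succ_ne_zero i), hg]
      by_cases hij : i = j
      · subst hij
        simp [Sum.map]
      · rw [if_neg (by simpa [Fin.succ_inj] using hij), if_neg (by simpa using hij)]
        simp [Sum.map]
  have h3 : Ψ (rename (Sum.map id Fin.succ) F)
      = aeval (fun s => g s + if s = Sum.inr j then w else 0) F := by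
    rw [hΨ, aeval_rename, Function.comp_def, funext fun s => hvmap s]
  have hY : Ψ (X (Sum.inr 0)) = Polynomial.C (xA (Sum.inr 0)) + Polynomial.X * EQ := by
    rw [hΨ, aeval_X, hvY]
  have hrel : Ψ (relA α F) = 0 := by
    show Ψ (rename Sum.inl α * X (Sum.inr 0) - rename (Sum.map id Fin.succ) F) = 0
    rw [map_sub, map_mul, h1 α, h3, master j F Q hQ g w, h2, hY, ← haαdef]
    have hr : aα * xA (Sum.inr 0) = toA α F (rename (Sum.map id Fin.succ) F) := toA_rel α F
    rw [← hr, hw, map_mul]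
    ring
  have hker : ∀ p ∈ Ideal.span {relA α F}, Ψ p = 0 := by
    intro p hp
    rw [Ideal.mem_span_singleton] at hp
    obtain ⟨c, rfl⟩ := hp
    rw [map_mul, hrel, zero_mul]
  set φ0 : A' →ₐ[k] Polynomial A' := Ideal.Quotient.liftₐ _ Ψ hker with hφ0def
  have hφ0 : ∀ p, φ0 (toA α F p) = Ψ p := by
    intro p
    rw [hφ0def, toA, Ideal.Quotient.mkₐ_eq_mk, Ideal.Quotient.liftₐ_apply]
    rfl
  have hφx : ∀ s, φ0 (xA s) = v s := by
    intro s
    rw [hxA]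
    simp only
    rw [hφ0, hΨ, aeval_X]
  have hφaα : φ0 aα = Polynomial.C aα := by
    rw [haαdef, hφ0, h1]
  have hφalg : ∀ c : k, (φ0 : A' →+* Polynomial A') (algebraMap k A' c)
      = algebraMap k (Polynomial A') c := fun c => φ0.commutes c
  have hφxR : ∀ s, (φ0 : A' →+* Polynomial A') (xA s) = v s := hφx
  have hφaαR : (φ0 : A' →+* Polynomial A') aα = Polynomial.C aα := hφaα
  -- evaluation at 0
  have hevX : ∀ s, Polynomial.eval 0 (v s) = xA s := by
    intro s
    rcases s with i | i
    · rw [hvinl]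
      simp
    · by_cases h0 : i = 0
      · subst h0
        rw [hvY]
        simp
      · rw [hvinr i h0]
        split_ifs <;> simp [hw]
  have hev : ∀ b : A', Polynomial.eval 0 (φ0 b) = b := by
    intro b
    obtain ⟨p, rfl⟩ := Ideal.Quotient.mkₐ_surjective k (I := Ideal.span {relA α F}) b
    rw [show (Ideal.Quotient.mkₐ k (Ideal.span {relA α F})) p = toA α F p from rfl, hφ0]
    induction p using MvPolynomial.induction_on with
    | C c =>
      rw [hΨ, aeval_C, ← MvPolynomial.algebraMap_eq, AlgHom.commutes]
      simp [Polynomial.algebraMap_apply]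
      rfl
    | add p q hp hq => rw [map_add, Polynomial.eval_add, hp, hq, map_add]
    | mul_X p s hp =>
      rw [map_mul, Polynomial.eval_mul, hp, map_mul]
      congr 1
      rw [hΨ, aeval_X]
      exact hevX s
  -- coassociativity
  set u : Polynomial (Polynomial A') := Polynomial.C Polynomial.X with hu
  set a : Polynomial (Polynomial A') := Polynomial.C (Polynomial.C aα) with ha
  set CC : A' →+* Polynomial (Polynomial A') :=
    (Polynomial.C : Polynomial A' →+* Polynomial (Polynomial A')).comp
      (Polynomial.C : A' →+* Polynomial A') with hCC
  have hCCapp : ∀ b : A', CC b = Polynomial.C (Polynomial.C b) := fun b => rfl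
  have hCw : Polynomial.C w = a * u := by rw [hw, map_mul, ha, hu]
  have hfmap : ∀ c : k, (Polynomial.mapRingHom (φ0 : A' →+* Polynomial A'))
      (algebraMap k (Polynomial A') c) = algebraMap k (Polynomial (Polynomial A')) c := by
    intro c
    simp [Polynomial.algebraMap_apply]
  letI : CommRing (Polynomial (Polynomial A')) := @Polynomial.commRing (Polynomial A') Polynomial.commRing
  have hm1 := hom_eval₂_aeval (k := k) (B := Polynomial A') (B' := Polynomial (Polynomial A')) (Polynomial.mapRingHom (φ0 : A' →+* Polynomial A'))
    hfmap g w Q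
  have hg2 : (fun s => (Polynomial.mapRingHom (φ0 : A' →+* Polynomial A')) (g s))
      = fun s : Fin m ⊕ Fin 2 => Polynomial.C (g s)
          + if s = Sum.inr j then a * u else 0 := by
    funext s
    calc (Polynomial.mapRingHom (φ0 : A' →+* Polynomial A')) (g s)
        = Polynomial.map (φ0 : A' →+* Polynomial A')
            (Polynomial.C (xA (Sum.map id Fin.succ s))) := rfl
      _ = Polynomial.C ((φ0 : A' →+* Polynomial A') (xA (Sum.map id Fin.succ s))) :=
          Polynomial.map_C _
      _ = Polynomial.C (v (Sum.map id Fin.succ s)) := by rw [hφxR]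
      _ = Polynomial.C (g s + if s = Sum.inr j then w else 0) := by rw [hvmap s]
      _ = Polynomial.C (g s) + (if s = Sum.inr j then a * u else 0) := by
          rw [map_add, apply_ite Polynomial.C, hCw, map_zero]
  have hwmap : (Polynomial.mapRingHom (φ0 : A' →+* Polynomial A')) w = a * Polynomial.X := by
    rw [Polynomial.coe_mapRingHom, hw, Polynomial.map_mul, Polynomial.map_C, Polynomial.map_X,
      hφaαR, ha]
  rw [hg2, hwmap] at hm1
  have hm2 := hom_eval₂_aeval (k := k) (B := Polynomial A') (B' := Polynomial (Polynomial A')) (Polynomial.C : Polynomial A' →+* Polynomial (Polynomial A'))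
    (fun c => by simp [Polynomial.algebraMap_apply]) g w Q
  rw [hCw] at hm2
  have hg21 : (fun s => (Polynomial.C : Polynomial A' →+* Polynomial (Polynomial A')) (g s))
      = fun s : Fin m ⊕ Fin 2 => Polynomial.C (g s) := by
    funext s
    rfl
  rw [hg21] at hm2
  have hm3 := hom_eval₂_aeval (k := k) (B := Polynomial A') (B' := Polynomial (Polynomial A'))
    (Polynomial.eval₂RingHom CC (u + Polynomial.X))
    (fun c => by simp [Polynomial.algebraMap_apply, hCC]) g w Q
  have hg3 : (fun s => (Polynomial.eval₂RingHom CC (u + Polynomial.X)) (g s))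
      = fun s : Fin m ⊕ Fin 2 => Polynomial.C (g s) := by
    funext s
    calc (Polynomial.eval₂RingHom CC (u + Polynomial.X)) (g s)
        = Polynomial.eval₂ CC (u + Polynomial.X)
            (Polynomial.C (xA (Sum.map id Fin.succ s))) := rfl
      _ = CC (xA (Sum.map id Fin.succ s)) := Polynomial.eval₂_C _ _
      _ = Polynomial.C (g s) := rfl
  have hw3 : (Polynomial.eval₂RingHom CC (u + Polynomial.X)) w = a * u + a * Polynomial.X := by
    rw [Polynomial.coe_eval₂RingHom, hw, Polynomial.eval₂_mul, Polynomial.eval₂_C,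
      Polynomial.eval₂_X, hCCapp, ha]
    ring
  rw [hg3, hw3] at hm3
  -- the three master identities
  have I1 := master j F Q hQ (fun s : Fin m ⊕ Fin 2 => Polynomial.C (g s)) (a * u)
  have I2 := master2 j F Q hQ (fun s : Fin m ⊕ Fin 2 => Polynomial.C (g s)) (a * u)
    (a * Polynomial.X)
  have I3 := master j F Q hQ (fun s : Fin m ⊕ Fin 2 => Polynomial.C (g s))
    (a * u + a * Polynomial.X)
  have haX : a ≠ 0 := by
    rw [ha]
    simpa using haα
  have key : u * Polynomial.eval₂
        (↑(aeval (fun s : Fin m ⊕ Fin 2 => Polynomial.C (g s)) :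
          MvPolynomial (Fin m ⊕ Fin 2) k →ₐ[k] Polynomial (Polynomial A'))) (a * u) Q
      + Polynomial.X * Polynomial.eval₂
        (↑(aeval (fun s : Fin m ⊕ Fin 2 => Polynomial.C (g s)
            + if s = Sum.inr j then a * u else 0) :
          MvPolynomial (Fin m ⊕ Fin 2) k →ₐ[k] Polynomial (Polynomial A'))) (a * Polynomial.X) Q
      = (u + Polynomial.X) * Polynomial.eval₂
        (↑(aeval (fun s : Fin m ⊕ Fin 2 => Polynomial.C (g s)) :
          MvPolynomial (Fin m ⊕ Fin 2) k →ₐ[k] Polynomial (Polynomial A')))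
          (a * u + a * Polynomial.X) Q := by
    apply mul_left_cancel₀ haX
    linear_combination -I1 - I2 + I3
  -- per-variable coassociativity
  have hXco : ∀ s : Fin m ⊕ Fin 3, (v s).map (φ0 : A' →+* Polynomial A')
      = Polynomial.eval₂ CC (u + Polynomial.X) (v s) := by
    intro s
    rcases s with i | i
    · rw [hvinl, Polynomial.map_C, Polynomial.eval₂_C, hφxR, hvinl, hCCapp]
    · by_cases h0 : i = 0
      · subst h0
        rw [hvY, Polynomial.map_add, Polynomial.map_C, Polynomial.map_mul, Polynomial.map_X,
          hφxR, hvY, Polynomial.eval₂_add, Polynomial.eval₂_C, Polynomial.eval₂_mul,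
          Polynomial.eval₂_X, hCCapp]
        rw [show Polynomial.map (φ0 : A' →+* Polynomial A') EQ
          = (Polynomial.mapRingHom (φ0 : A' →+* Polynomial A')) EQ from rfl]
        rw [show (Polynomial.eval₂ CC (u + Polynomial.X) EQ)
          = (Polynomial.eval₂RingHom CC (u + Polynomial.X)) EQ from rfl]
        rw [hEQ, hm1, hm3]
        rw [show Polynomial.C (Polynomial.C (xA (Sum.inr 0)) + Polynomial.X * EQ)
          = Polynomial.C (Polynomial.C (xA (Sum.inr 0))) + u * Polynomial.C EQ by
            rw [map_add, map_mul, hu]]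
        rw [show (Polynomial.C EQ : Polynomial (Polynomial A'))
          = (Polynomial.C : Polynomial A' →+* Polynomial (Polynomial A')) EQ from rfl]
        rw [hEQ, hm2]
        linear_combination key
      · rw [hvinr i h0, Polynomial.map_add, Polynomial.map_C, hφxR, hvinr i h0,
          Polynomial.eval₂_add, Polynomial.eval₂_C, hCCapp]
        by_cases hj : i = j.succ
        · rw [if_pos hj, hw, Polynomial.map_mul, Polynomial.map_C, Polynomial.map_X,
            hφaαR, Polynomial.eval₂_mul, Polynomial.eval₂_C, Polynomial.eval₂_X, hCCapp]
          rw [show Polynomial.C (Polynomial.C (xA (Sum.inr i)) + Polynomial.C aα * Polynomial.X)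
            = Polynomial.C (Polynomial.C (xA (Sum.inr i)))
              + Polynomial.C (Polynomial.C aα) * u by rw [map_add, map_mul, hu]]
          ring
        · rw [if_neg hj, add_zero, Polynomial.map_zero, Polynomial.eval₂_zero]
  have hco : ∀ b : A', (φ0 b).map (φ0 : A' →+* Polynomial A')
      = Polynomial.eval₂ CC (u + Polynomial.X) (φ0 b) := by
    intro b
    obtain ⟨p, rfl⟩ := Ideal.Quotient.mkₐ_surjective k (I := Ideal.span {relA α F}) b
    rw [show (Ideal.Quotient.mkₐ k (Ideal.span {relA α F})) p = toA α F p from rfl, hφ0]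
    induction p using MvPolynomial.induction_on with
    | C c =>
      rw [hΨ, aeval_C, Polynomial.algebraMap_apply, Polynomial.map_C, Polynomial.eval₂_C,
        hφalg, Polynomial.algebraMap_apply, hCCapp]
    | add p q hp hq => rw [map_add, Polynomial.map_add, Polynomial.eval₂_add, hp, hq]
    | mul_X p s hp =>
      rw [map_mul, Polynomial.map_mul, Polynomial.eval₂_mul, hp, hΨ, aeval_X]
      congr 1
      exact hXco s
  -- assemble the exponential map
  refine ⟨⟨φ0, hev, hco⟩, ?_, ?_, ?_⟩
  · -- nontriviality
    intro htop
    have hmem : xA (Sum.inr j.succ) ∈ (ExpMap.mk φ0 hev hco).invariants := by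
      rw [htop]
      exact Algebra.mem_top
    have hmem2 : φ0 (xA (Sum.inr j.succ)) = Polynomial.C (xA (Sum.inr j.succ)) :=
      (AlgHom.mem_equalizer _ _ _).mp hmem
    rw [hφx, hvinr j.succ (Fin.succ_ne_zero j), if_pos rfl, hw] at hmem2
    have hz : Polynomial.C aα * Polynomial.X = (0 : Polynomial A') := by
      linear_combination hmem2
    have := congrArg (fun p : Polynomial A' => Polynomial.coeff p 1) hz
    simp at this
    exact haα this
  · intro i
    refine (AlgHom.mem_equalizer _ _ _).mpr ?_
    show φ0 (toA α F (X (Sum.inl i))) = Polynomial.CAlgHom (toA α F (X (Sum.inl i)))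
    rw [hφ0, hΨ, aeval_X, hvinl]
    rfl
  · intro i hi
    refine (AlgHom.mem_equalizer _ _ _).mpr ?_
    show φ0 (toA α F (X (Sum.inr i.succ))) = Polynomial.CAlgHom (toA α F (X (Sum.inr i.succ)))
    rw [hφ0, hΨ, aeval_X, hvinr i.succ (Fin.succ_ne_zero i),
      if_neg (by simpa [Fin.succ_inj] using hi), add_zero]
    rfl

end DerksenAux3

/-- For A = k[X₁,…,X_m,Y,Z,T]/(αY − F) with α ∉ k and F of positive degree
in Z or T, the subring k[x₁,…,x_m,z,t] is contained in the Derksen invariant DK(A). -/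
theorem subring_le_Derksen {k : Type*} [Field k] {m : ℕ}
    (α : MvPolynomial (Fin m) k) (F : MvPolynomial (Fin m ⊕ Fin 2) k)
    (hα : α ∉ Set.range (C : k → MvPolynomial (Fin m) k))
    (hF : 1 ≤ degreeOf (Sum.inr 0) F ∨ 1 ≤ degreeOf (Sum.inr 1) F)
    (hdom : IsDomain (RingA α F)) :
    Algebra.adjoin k ((Set.range fun i : Fin m => toA α F (X (Sum.inl i)))
        ∪ {toA α F (X (Sum.inr 1)), toA α F (X (Sum.inr 2))})
      ≤ Derksen k (RingA α F) := by
  have hα0 : α ≠ 0 := fun h => hα ⟨0, by rw [h, map_zero]⟩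
  have haα := aA_ne_zero α F hα0
  obtain ⟨φ0, h0top, h0x, h0zt⟩ := exists_expMap α F hdom haα 0
  obtain ⟨φ1, h1top, h1x, h1zt⟩ := exists_expMap α F hdom haα 1
  rw [Algebra.adjoin_le_iff]
  rintro b hb
  rcases hb with ⟨i, rfl⟩ | hb
  · exact Algebra.subset_adjoin (Set.mem_biUnion
      (show φ0 ∈ {φ : ExpMap k (RingA α F) | φ.invariants ≠ ⊤} from h0top) (h0x i))
  · rcases hb with rfl | rfl
    · -- z
      have hmem : toA α F (X (Sum.inr 1)) ∈ φ1.invariants := by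
        have h := h1zt 0 (by decide)
        rwa [show Fin.succ (0 : Fin 2) = (1 : Fin 3) from rfl] at h
      exact Algebra.subset_adjoin (Set.mem_biUnion
        (show φ1 ∈ {φ : ExpMap k (RingA α F) | φ.invariants ≠ ⊤} from h1top) hmem)
    · -- t
      have hmem : toA α F (X (Sum.inr 2)) ∈ φ0.invariants := by
        have h := h0zt 1 (by decide)
        rwa [show Fin.succ (1 : Fin 2) = (2 : Fin 3) from rfl] at h
      exact Algebra.subset_adjoin (Set.mem_biUnion
        (show φ0 ∈ {φ : ExpMap k (RingA α F) | φ.invariants ≠ ⊤} from h0top) hmem)
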